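/- Let d, m be positive integers, (P) a predicate on integers, and λ = (λ_1, ..., λ_ℓ) a partition with multiplicity sequence (f_u)_{u≥0}. Then the following are equivalent: (a) λ_k - λ_{k+m} ≥ d for all 1 ≤ k ≤ ℓ - m, and for all 1 ≤ k ≤ ℓ - m + 1, if λ_k - λ_{k+m-1} ≤ d-1 then λ_k + ... + λ_{k+m-1} satisfies (P); (b) f_u + ... + f_{u+d-1} ≤ m for all u ≥ 0, and for all u ≥ 0, if f_u + ... + f_{u+d-1} = m then u·f_u + ... + (u+d-1)·f_{u+d-1} satisfies (P). -/

import Mathlib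

private lemma sum_ite_window (d u a : ℕ) (f : ℕ → ℕ) :
    (∑ t ∈ Finset.range d, if a = u + t then f t else 0)
      = if u ≤ a ∧ a < u + d then f (a - u) else 0 := by
  by_cases h : u ≤ a ∧ a < u + d
  · rw [if_pos h, Finset.sum_eq_single (a - u)]
    · rw [if_pos (by omega)]
    · intro t ht hne
      rw [if_neg]
      intro he; exact hne (by omega)
    · intro h'; exact absurd (Finset.mem_range.2 (by omega)) h'
  · rw [if_neg h]
    refine Finset.sum_eq_zero fun t ht => ?_
    rw [Finset.mem_range] at ht
    rw [if_neg]; omega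

private lemma count_window (d u : ℕ) (L : List ℕ) :
    ∑ t ∈ Finset.range d, L.count (u + t)
      = L.countP (fun x => decide (u ≤ x ∧ x < u + d)) := by
  induction L with
  | nil => simp
  | cons a l ih =>
    simp only [List.count_cons, List.countP_cons, beq_iff_eq, decide_eq_true_eq]
    rw [Finset.sum_add_distrib, ih, sum_ite_window d u a (fun _ => 1)]

private lemma wcount_window (d u : ℕ) (L : List ℕ) :
    ∑ t ∈ Finset.range d, (u + t) * L.count (u + t)
      = (L.filter (fun x => decide (u ≤ x ∧ x < u + d))).sum := by
  induction L with
  | nil => simp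
  | cons a l ih =>
    simp only [List.count_cons, beq_iff_eq, List.filter_cons]
    have step : ∀ t ∈ Finset.range d,
        (u + t) * (l.count (u + t) + if a = u + t then 1 else 0)
          = (u + t) * l.count (u + t) + (if a = u + t then u + t else 0) := by
      intro t _
      by_cases h : a = u + t <;> simp [h, Nat.mul_add]
    rw [Finset.sum_congr rfl step, Finset.sum_add_distrib, ih,
      sum_ite_window d u a (fun t => u + t)]
    by_cases h : u ≤ a ∧ a < u + d
    · rw [if_pos h]
      have h2 : u + (a - u) = a := by omega
      rw [h2]
      rw [if_pos (by simpa using h), List.sum_cons]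
      omega
    · rw [if_neg h]
      rw [if_neg (by simpa using h)]
      omega

private lemma countP_split (d u : ℕ) (L : List ℕ) :
    L.countP (fun x => decide (u ≤ x))
      = L.countP (fun x => decide (u ≤ x ∧ x < u + d))
        + L.countP (fun x => decide (u + d ≤ x)) := by
  induction L with
  | nil => simp
  | cons a l ih =>
    simp only [List.countP_cons, decide_eq_true_eq]
    rw [ih]
    split_ifs <;> omega

private lemma filter_ge_eq_take (L : List ℕ) (hL : List.Pairwise (· ≥ ·) L) (u : ℕ) :
    L.filter (fun x => decide (u ≤ x)) = L.take (L.countP (fun x => decide (u ≤ x))) := by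
  induction L with
  | nil => simp
  | cons a l ih =>
    obtain ⟨ha, hs⟩ := List.pairwise_cons.mp hL
    by_cases h : u ≤ a
    · rw [List.filter_cons_of_pos (by simpa using h), List.countP_cons,
        if_pos (by simpa using h)]
      rw [List.take_succ_cons, ih hs]
    · rw [List.filter_cons_of_neg (by simpa using h), List.countP_cons,
        if_neg (by simpa using h)]
      have h0 : l.countP (fun x => decide (u ≤ x)) = 0 := by
        rw [List.countP_eq_zero]
        intro x hx
        simp only [decide_eq_true_eq]
        have := ha x hx
        omega
      have h1 : l.filter (fun x => decide (u ≤ x)) = [] := by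
        rw [List.filter_eq_nil_iff]
        intro x hx
        simp only [decide_eq_true_eq]
        have := ha x hx
        omega
      simp [h0, h1]

private lemma lt_countP_iff (L : List ℕ) (hL : List.Pairwise (· ≥ ·) L) (u : ℕ)
    (i : ℕ) (h : i < L.length) :
    u ≤ L[i] ↔ i < L.countP (fun x => decide (u ≤ x)) := by
  constructor
  · intro hu
    by_contra hlt
    push_neg at hlt
    have hall : ∀ x ∈ L.take (i + 1), u ≤ x := by
      intro x hx
      obtain ⟨j, hj, rfl⟩ := List.mem_iff_getElem.mp hx
      have hj1 : j < i + 1 := by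
        have := hj.trans_le (List.length_take_le (i+1) L)
        have h2 := hj
        simp only [List.length_take] at h2
        omega
      rw [List.getElem_take]
      rcases Nat.lt_or_ge j i with hji | hji
      · have := hL.rel_get_of_lt (a := ⟨j, by omega⟩) (b := ⟨i, h⟩) (by simpa using hji)
        simp only [List.get_eq_getElem] at this
        omega
      · have : j = i := by omega
        subst this
        exact hu
    have hlen : (L.take (i+1)).length = i + 1 := by
      rw [List.length_take]; omega
    have hc : (L.take (i+1)).countP (fun x => decide (u ≤ x)) = (L.take (i+1)).length :=
      List.countP_eq_length.mpr (fun x hx => by simpa using hall x hx)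
    have : L.countP (fun x => decide (u ≤ x))
        = (L.take (i+1)).countP (fun x => decide (u ≤ x))
          + (L.drop (i+1)).countP (fun x => decide (u ≤ x)) := by
      conv_lhs => rw [← List.take_append_drop (i+1) L]
      rw [List.countP_append]
    omega
  · intro hi
    have hflen : (L.filter (fun x => decide (u ≤ x))).length
        = L.countP (fun x => decide (u ≤ x)) := List.countP_eq_length_filter.symm
    have hmem : (L.filter (fun x => decide (u ≤ x)))[i]'(by omega)
        ∈ L.filter (fun x => decide (u ≤ x)) := List.getElem_mem _
    have hp := List.of_mem_filter hmem
    simp only [decide_eq_true_eq] at hp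
    have heq : (L.filter (fun x => decide (u ≤ x)))[i]'(by omega) = L[i] := by
      rw [List.getElem_of_eq (filter_ge_eq_take L hL u)]
      exact List.getElem_take
    rwa [heq] at hp

private lemma countP_le_len (p : ℕ → Bool) (L : List ℕ) : L.countP p ≤ L.length :=
  List.countP_le_length

private lemma filter_window_eq (L : List ℕ) (hL : List.Pairwise (· ≥ ·) L) (u d : ℕ) :
    L.filter (fun x => decide (u ≤ x ∧ x < u + d))
      = (L.drop (L.countP (fun x => decide (u + d ≤ x)))).take
          (L.countP (fun x => decide (u ≤ x)) - L.countP (fun x => decide (u + d ≤ x))) := by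
  set a := L.countP (fun x => decide (u + d ≤ x)) with ha
  set b := L.countP (fun x => decide (u ≤ x)) with hb
  have hbn : b ≤ L.length := countP_le_len _ _
  have han : a ≤ L.length := countP_le_len _ _
  have hab : a ≤ b := by
    have := countP_split d u L
    omega
  have key : L.filter (fun x => decide (u ≤ x ∧ x < u + d))
      = (L.take b).filter (fun x => decide (u ≤ x ∧ x < u + d))
        ++ (L.drop b).filter (fun x => decide (u ≤ x ∧ x < u + d)) := by
    conv_lhs => rw [← List.take_append_drop b L]
    rw [List.filter_append]
  have hdrop : (L.drop b).filter (fun x => decide (u ≤ x ∧ x < u + d)) = [] := by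
    rw [List.filter_eq_nil_iff]
    intro x hx
    obtain ⟨j, hj, rfl⟩ := List.mem_iff_getElem.mp hx
    have hjn : b + j < L.length := by
      have := hj; simp only [List.length_drop] at this; omega
    rw [List.getElem_drop]
    simp only [decide_eq_true_eq, not_and]
    intro hu
    have := (lt_countP_iff L hL u (b + j) hjn).mp hu
    omega
  have htake2 : L.take b = L.take a ++ (L.take b).drop a := by
    conv_lhs => rw [← List.take_append_drop a (L.take b)]
    rw [List.take_take, Nat.min_eq_left hab]
  have hfa : (L.take a).filter (fun x => decide (u ≤ x ∧ x < u + d)) = [] := by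
    rw [List.filter_eq_nil_iff]
    intro x hx
    obtain ⟨j, hj, rfl⟩ := List.mem_iff_getElem.mp hx
    have hjn : j < a := by
      have := hj; simp only [List.length_take] at this; omega
    rw [List.getElem_take]
    simp only [decide_eq_true_eq, not_and]
    intro hu
    have := (lt_countP_iff L hL (u + d) j (by omega)).mpr hjn
    omega
  have hmidlen : ((L.take b).drop a).length = b - a := by
    simp only [List.length_drop, List.length_take]
    omega
  have hfm : ((L.take b).drop a).filter (fun x => decide (u ≤ x ∧ x < u + d))
      = (L.take b).drop a := by
    rw [List.filter_eq_self]
    intro x hx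
    obtain ⟨j, hj, rfl⟩ := List.mem_iff_getElem.mp hx
    rw [hmidlen] at hj
    have hjb : a + j < b := by omega
    have h1 : ((L.take b).drop a)[j]'(by rw [hmidlen]; omega) = L[a + j]'(by omega) := by
      rw [List.getElem_drop]
      exact List.getElem_take
    rw [h1]
    simp only [decide_eq_true_eq]
    constructor
    · exact (lt_countP_iff L hL u (a + j) (by omega)).mpr (by omega)
    · by_contra hc
      push_neg at hc
      have := (lt_countP_iff L hL (u + d) (a + j) (by omega)).mp hc
      omega
  rw [key, hdrop, List.append_nil, htake2, List.filter_append, hfa, List.nil_append, hfm,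
    List.drop_take]

/-- equivalence between difference/parity-type conditions on the parts of a
partition and conditions on its multiplicity sequence, for an arbitrary predicate `P`. -/
theorem stmt_1 (d m : ℕ) (hd : 0 < d) (hm : 0 < m) (P : ℕ → Prop) (L : List ℕ)
    (hL : List.Pairwise (· ≥ ·) L) :
    ((∀ (k : ℕ) (h : k + m < L.length), L.get ⟨k + m, h⟩ + d ≤ L.get ⟨k, by omega⟩) ∧
      ∀ (k : ℕ) (h : k + m ≤ L.length),
        L.get ⟨k, by omega⟩ ≤ L.get ⟨k + m - 1, by omega⟩ + (d - 1) →
          P (((L.drop k).take m).sum)) ↔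
    ((∀ u : ℕ, ∑ t ∈ Finset.range d, L.count (u + t) ≤ m) ∧
      ∀ u : ℕ, (∑ t ∈ Finset.range d, L.count (u + t)) = m →
        P (∑ t ∈ Finset.range d, (u + t) * L.count (u + t))) := by
  simp only [List.get_eq_getElem]
  have hP2 : ∀ u i, ∀ h : i < L.length,
      (u ≤ L[i] ↔ i < L.countP (fun x => decide (u ≤ x))) :=
    fun u i h => lt_countP_iff L hL u i h
  have hcount : ∀ u, (∑ t ∈ Finset.range d, L.count (u + t))
      = L.countP (fun x => decide (u ≤ x)) - L.countP (fun x => decide (u + d ≤ x)) := by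
    intro u
    have h1 := count_window d u L
    have h2 := countP_split d u L
    omega
  have hwsum : ∀ u, (∑ t ∈ Finset.range d, (u + t) * L.count (u + t))
      = ((L.drop (L.countP (fun x => decide (u + d ≤ x)))).take
          (L.countP (fun x => decide (u ≤ x))
            - L.countP (fun x => decide (u + d ≤ x)))).sum := by
    intro u
    rw [wcount_window d u L, filter_window_eq L hL u d]
  have hmono : ∀ u, L.countP (fun x => decide (u + d ≤ x))
      ≤ L.countP (fun x => decide (u ≤ x)) := by
    intro u; have := countP_split d u L; omega
  have hbn : ∀ u, L.countP (fun x => decide (u ≤ x)) ≤ L.length :=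
    fun u => List.countP_le_length
  constructor
  · rintro ⟨ha1, ha2⟩
    have hb1 : ∀ u : ℕ, ∑ t ∈ Finset.range d, L.count (u + t) ≤ m := by
      intro u
      by_contra hgt
      push_neg at hgt
      rw [hcount u] at hgt
      set a := L.countP (fun x => decide (u + d ≤ x)) with haa
      set b := L.countP (fun x => decide (u ≤ x)) with hbb
      have hbn' := hbn u
      rw [← hbb] at hbn'
      have hkm : a + m < L.length := by omega
      have h1 : u ≤ L[a + m]'(by omega) := (hP2 u (a + m) (by omega)).mpr (by omega)
      have h2 : ¬ (u + d ≤ L[a]'(by omega)) := by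
        intro hc
        have := (hP2 (u + d) a (by omega)).mp hc
        omega
      have h3 := ha1 a (by omega)
      omega
    refine ⟨hb1, ?_⟩
    intro u hNu
    have hNu' := hNu
    rw [hcount u] at hNu'
    have hmono' := hmono u
    set a := L.countP (fun x => decide (u + d ≤ x)) with haa
    set b := L.countP (fun x => decide (u ≤ x)) with hbb
    have hbn' := hbn u
    rw [← hbb] at hbn'
    have hbu : b = a + m := by omega
    have hkm : a + m ≤ L.length := by omega
    have h1 : ¬ (u + d ≤ L[a]'(by omega)) := by
      intro hc
      have := (hP2 (u + d) a (by omega)).mp hc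
      omega
    have h2 : u ≤ L[a + m - 1]'(by omega) := (hP2 u (a + m - 1) (by omega)).mpr (by omega)
    have h3 := ha2 a hkm (by omega)
    rw [hwsum u, ← haa, ← hbb, hNu']
    exact h3
  · rintro ⟨hb1, hb2⟩
    constructor
    · intro k h
      by_contra hc
      push_neg at hc
      have h1 : k + m < L.countP (fun x => decide (L[k + m]'h ≤ x)) :=
        (hP2 (L[k + m]'h) (k + m) h).mp le_rfl
      have h2 : L.countP (fun x => decide (L[k + m]'h + d ≤ x)) ≤ k := by
        by_contra hc2
        push_neg at hc2
        have := (hP2 (L[k + m]'h + d) k (by omega)).mpr hc2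
        omega
      have h3 := hb1 (L[k + m]'h)
      rw [hcount _] at h3
      omega
    · intro k h hle
      have hn1 : k + m - 1 < L.length := by omega
      set u := L[k + m - 1]'hn1 with hu
      have h1 : k + m - 1 < L.countP (fun x => decide (u ≤ x)) :=
        (hP2 u (k + m - 1) hn1).mp le_rfl
      have h2 : L.countP (fun x => decide (u + d ≤ x)) ≤ k := by
        by_contra hc2
        push_neg at hc2
        have := (hP2 (u + d) k (by omega)).mpr hc2
        omega
      have h3 := hb1 u
      rw [hcount u] at h3
      have hmono' := hmono u
      have hNu : (∑ t ∈ Finset.range d, L.count (u + t)) = m := by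
        rw [hcount u]; omega
      have h4 := hb2 u hNu
      rw [hwsum u] at h4
      have ea : L.countP (fun x => decide (u + d ≤ x)) = k := by omega
      have eb : L.countP (fun x => decide (u ≤ x))
          - L.countP (fun x => decide (u + d ≤ x)) = m := by omega
      rw [eb, ea] at h4
      exact h4
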